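/- arXiv:1607.02767 — 3 statements merged into one kernel-verified Lean document; each statement's English description precedes it below -/
import Mathlib

section
/- Let c > 0 and α ∈ (0,1). If V : ℝ≥0 → ℝ≥0 is differentiable and satisfies V'(t) ≤ -c·V(t)^α whenever V(t) > 0, then V reaches zero in finite time; more precisely V(t) = 0 for all t ≥ V(0)^(1-α) / (c(1-α)). -/
-- key comparison lemma
lemma keyA (c α : ℝ) (hc : 0 < c) (hα : α ∈ Set.Ioo (0:ℝ) 1)
    (V : ℝ → ℝ) (hVdiff : Differentiable ℝ V)
    (hineq : ∀ t, 0 ≤ t → 0 < V t → deriv V t ≤ -c * V t ^ α)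
    (a b : ℝ) (ha : 0 ≤ a) (hab : a ≤ b)
    (hpos : ∀ u ∈ Set.Icc a b, 0 < V u) :
    V b ^ (1-α) + c*(1-α)*b ≤ V a ^ (1-α) + c*(1-α)*a := by
  obtain ⟨hα0, hα1⟩ := hα
  set β := 1 - α with hβ
  have hβ0 : 0 < β := by simp [hβ]; linarith
  set g : ℝ → ℝ := fun t => V t ^ β + c*β*t with hg
  have hanti : AntitoneOn g (Set.Icc a b) := by
    apply AntitoneOn.mono (s := Set.Icc a b)
      (antitoneOn_of_deriv_nonpos (convex_Icc a b) ?_ ?_ ?_) le_rfl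
    · apply ContinuousOn.add
      · exact ContinuousOn.rpow_const (hVdiff.continuous.continuousOn) (fun x _ => Or.inr hβ0.le)
      · exact (continuous_const.mul continuous_id).continuousOn
    · rw [interior_Icc]
      intro x hx
      have hVx : 0 < V x := hpos x (Set.mem_Icc.mpr ⟨hx.1.le, hx.2.le⟩)
      have h1 : HasDerivAt (fun t => V t ^ β) (deriv V x * β * V x ^ (β - 1)) x :=
        (hVdiff x).hasDerivAt.rpow_const (Or.inl hVx.ne')
      exact ((h1.add ((hasDerivAt_id x).const_mul (c*β))).differentiableAt).differentiableWithinAt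
    · rw [interior_Icc]
      intro x hx
      have hx0 : 0 ≤ x := le_trans ha hx.1.le
      have hVx : 0 < V x := hpos x (Set.mem_Icc.mpr ⟨hx.1.le, hx.2.le⟩)
      have h1 : HasDerivAt (fun t => V t ^ β) (deriv V x * β * V x ^ (β - 1)) x :=
        (hVdiff x).hasDerivAt.rpow_const (Or.inl hVx.ne')
      have h2 : HasDerivAt g (deriv V x * β * V x ^ (β - 1) + c*β*1) x :=
        h1.add ((hasDerivAt_id x).const_mul (c*β))
      rw [h2.deriv]
      have hpow : 0 < V x ^ (β - 1) := Real.rpow_pos_of_pos hVx _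
      have hbound : deriv V x * β * V x ^ (β - 1) ≤ (-c * V x ^ α) * β * V x ^ (β - 1) := by
        have := hineq x hx0 hVx
        have h' : 0 ≤ β * V x ^ (β - 1) := le_of_lt (mul_pos hβ0 hpow)
        nlinarith
      have heq : (-c * V x ^ α) * β * V x ^ (β - 1) = -(c*β) := by
        have : V x ^ α * V x ^ (β - 1) = 1 := by
          rw [← Real.rpow_add hVx]
          have he : α + (β - 1) = 0 := by simp [hβ]
          rw [he, Real.rpow_zero]
        rw [show (-c * V x ^ α) * β * V x ^ (β - 1) = -(c*β) * (V x ^ α * V x ^ (β-1)) by ring,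
          this, mul_one]
      linarith
  have := hanti (Set.mem_Icc.mpr ⟨le_rfl, hab⟩) (Set.mem_Icc.mpr ⟨hab, le_rfl⟩) hab
  simpa [hg] using this

/-- Finite-time convergence from the differential inequality V' ≤ -c V^α, α ∈ (0,1). -/
theorem finite_time_convergence
    (c α : ℝ) (hc : 0 < c) (hα : α ∈ Set.Ioo (0:ℝ) 1)
    (V : ℝ → ℝ) (hVdiff : Differentiable ℝ V)
    (hVnonneg : ∀ t, 0 ≤ t → 0 ≤ V t)
    (hineq : ∀ t, 0 ≤ t → 0 < V t → deriv V t ≤ -c * V t ^ α) :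
    ∀ t, V 0 ^ (1 - α) / (c * (1 - α)) ≤ t → V t = 0 := by
  obtain ⟨hα0, hα1⟩ := hα
  have hβ0 : 0 < 1 - α := by linarith
  have hk : 0 < c * (1 - α) := mul_pos hc hβ0
  set T := V 0 ^ (1 - α) / (c * (1 - α)) with hT
  have hT0 : 0 ≤ T := div_nonneg (Real.rpow_nonneg (hVnonneg 0 le_rfl) _) hk.le
  -- step 1: exists t0 ∈ [0,T] with V t0 = 0
  have hzero : ∃ t0 ∈ Set.Icc 0 T, V t0 = 0 := by
    by_contra h
    push_neg at h
    have hpos : ∀ u ∈ Set.Icc (0:ℝ) T, 0 < V u := fun u hu =>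
      lt_of_le_of_ne (hVnonneg u hu.1) (Ne.symm (h u hu))
    have := keyA c α hc ⟨hα0, hα1⟩ V hVdiff hineq 0 T le_rfl hT0 hpos
    have hTe : c*(1-α)*T = V 0 ^ (1-α) := by
      rw [hT, mul_div_assoc']
      exact mul_div_cancel_left₀ _ hk.ne'
    have hVT : 0 < V T ^ (1-α) := Real.rpow_pos_of_pos (hpos T ⟨hT0, le_rfl⟩) _
    simp only [mul_zero, add_zero] at this
    linarith
  obtain ⟨t0, ht0, hVt0⟩ := hzero
  -- step 2: V stays 0 after t0
  have hstay : ∀ t, t0 ≤ t → V t = 0 := by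
    intro t ht
    by_contra h
    have hVt : 0 < V t := lt_of_le_of_ne (hVnonneg t (le_trans ht0.1 ht)) (Ne.symm h)
    set S := {u | u ∈ Set.Icc t0 t ∧ V u = 0} with hS
    have hSne : S.Nonempty := ⟨t0, ⟨le_rfl, ht⟩, hVt0⟩
    have hSbdd : BddAbove S := ⟨t, fun u hu => hu.1.2⟩
    set s := sSup S with hs
    have hsmem : s ∈ Set.Icc t0 t := by
      constructor
      · exact le_csSup hSbdd ⟨⟨le_rfl, ht⟩, hVt0⟩
      · exact csSup_le hSne (fun u hu => hu.1.2)
    have hVs : V s = 0 := by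
      have hclosed : IsClosed S := by
        have : S = Set.Icc t0 t ∩ V ⁻¹' {0} := by ext u; simp [hS, Set.mem_Icc]
        rw [this]
        exact isClosed_Icc.inter (isClosed_singleton.preimage hVdiff.continuous)
      exact (hclosed.csSup_mem hSne hSbdd).2
    have hst : s < t := lt_of_le_of_ne hsmem.2 (fun he => h (he ▸ hVs))
    -- pick u ∈ (s,t) with V u < V t
    have hcont : ContinuousAt V s := hVdiff.continuous.continuousAt
    have hev : ∀ᶠ u in nhds s, V u < V t := hcont.eventually_lt continuousAt_const (by rw [hVs]; exact hVt)
    obtain ⟨δ, hδ0, hδ⟩ := Metric.eventually_nhds_iff.mp hev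
    obtain ⟨u, hus, hut, hVu⟩ : ∃ u, s < u ∧ u < t ∧ V u < V t := by
      refine ⟨min (s + δ/2) ((s+t)/2), lt_min (by linarith) (by linarith),
        (min_le_right _ _).trans_lt (by linarith), ?_⟩
      apply hδ
      rw [Real.dist_eq, abs_lt]
      have h1 : s < min (s + δ/2) ((s+t)/2) := lt_min (by linarith) (by linarith)
      have h2 : min (s + δ/2) ((s+t)/2) ≤ s + δ/2 := min_le_left _ _
      constructor <;> linarith
    have hpos : ∀ w ∈ Set.Icc u t, 0 < V w := by
      intro w hw
      rcases lt_or_eq_of_le (hVnonneg w (le_trans (le_trans ht0.1 hsmem.1) (le_trans hus.le hw.1))) with h' | h'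
      · exact h'
      · exfalso
        have hwS : w ∈ S := ⟨⟨le_trans hsmem.1 (le_trans hus.le hw.1), hw.2⟩, h'.symm⟩
        have : w ≤ s := le_csSup hSbdd hwS
        linarith [hw.1]
    have hu0 : 0 ≤ u := le_trans (le_trans ht0.1 hsmem.1) hus.le
    have hkey := keyA c α hc ⟨hα0, hα1⟩ V hVdiff hineq u t hu0 hut.le hpos
    have h1 : V t ^ (1-α) < V t ^ (1-α) := by
      calc V t ^ (1-α) ≤ V u ^ (1-α) + c*(1-α)*u - c*(1-α)*t := by linarith
        _ < V u ^ (1-α) := by nlinarith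
        _ < V t ^ (1-α) := Real.rpow_lt_rpow (hVnonneg u hu0) hVu hβ0
    exact lt_irrefl _ h1
  exact fun t ht => hstay t (le_trans ht0.2 ht)
end

section
/- Let V : ℝ≥0 → ℝ≥0 be continuous, differentiable wherever positive, and let c > 0, α ∈ (0,1), V̄ > 0 satisfy: V'(t) ≤ -c·V(t)^α whenever t > Φ̄ and V(t) ≥ V̄ (for some Φ̄ ≥ 0). Then limsup_{t→∞} V(t) ≤ V̄, and moreover there exists T such that V(t) < V̄ for all t > T (once V drops strictly below V̄ after time Φ̄ it can never return to V̄, since at any time with V(t) = V̄ the derivative is ≤ -c·V̄^α < 0). -/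
open Filter

/-- Attractivity/invariance of the sublevel set {V < V̄}: if V' ≤ -c V^α on the
superlevel set {V ≥ V̄} for times past Φ̄, then V eventually enters and remains
strictly below V̄, and in particular limsup V ≤ V̄. -/
theorem sublevel_attractive
    (c α Vbar Φ : ℝ) (hc : 0 < c) (hα : α ∈ Set.Ioo (0:ℝ) 1)
    (hVbar : 0 < Vbar) (hΦ : 0 ≤ Φ)
    (V : ℝ → ℝ) (hVcont : ContinuousOn V (Set.Ici 0))
    (hVnonneg : ∀ t, 0 ≤ t → 0 ≤ V t)
    (hVdiff : ∀ t, 0 ≤ t → 0 < V t → DifferentiableAt ℝ V t)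
    (hineq : ∀ t, Φ < t → Vbar ≤ V t → deriv V t ≤ -c * V t ^ α) :
    limsup V atTop ≤ Vbar ∧ ∃ T : ℝ, ∀ t, T < t → V t < Vbar := by
  set δ : ℝ := c * Vbar ^ α with hδdef
  have hδ : 0 < δ := mul_pos hc (Real.rpow_pos_of_pos hVbar α)
  -- derivative bound: at any t > Φ with V t ≥ Vbar, deriv V t ≤ -δ
  have hder : ∀ t, Φ < t → Vbar ≤ V t → deriv V t ≤ -δ := by
    intro t ht hV
    refine (hineq t ht hV).trans ?_
    have : Vbar ^ α ≤ V t ^ α := Real.rpow_le_rpow hVbar.le hV hα.1.le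
    nlinarith
  -- quantitative decrease on intervals where V ≥ Vbar
  have key : ∀ a b : ℝ, Φ < a → a ≤ b → (∀ t ∈ Set.Icc a b, Vbar ≤ V t) →
      V b ≤ V a - δ * (b - a) := by
    intro a b hΦa hab hall
    have ha0 : (0:ℝ) ≤ a := hΦ.trans hΦa.le
    have hIcc : Set.Icc a b ⊆ Set.Ici 0 := fun t ht => ha0.trans ht.1
    set W : ℝ → ℝ := fun t => V t + δ * t with hW
    have hWcont : ContinuousOn W (Set.Icc a b) :=
      (hVcont.mono hIcc).add (continuousOn_const.mul continuousOn_id)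
    have hanti : AntitoneOn W (Set.Icc a b) := by
      have hint : interior (Set.Icc a b) = Set.Ioo a b := interior_Icc
      refine antitoneOn_of_deriv_nonpos (convex_Icc a b) hWcont ?_ ?_
      · intro t ht
        rw [hint] at ht
        have h1 : Vbar ≤ V t := hall t ⟨ht.1.le, ht.2.le⟩
        have hdV : DifferentiableAt ℝ V t :=
          hVdiff t (ha0.trans ht.1.le) (hVbar.trans_le h1)
        exact (hdV.add ((differentiable_id.const_mul δ) t)).differentiableWithinAt
      · intro t ht
        rw [hint] at ht
        have h1 : Vbar ≤ V t := hall t ⟨ht.1.le, ht.2.le⟩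
        have hdV : DifferentiableAt ℝ V t :=
          hVdiff t (ha0.trans ht.1.le) (hVbar.trans_le h1)
        have hWd : HasDerivAt W (deriv V t + δ * 1) t :=
          hdV.hasDerivAt.add ((hasDerivAt_id t).const_mul δ)
        rw [hWd.deriv]
        have := hder t (hΦa.trans ht.1) h1
        linarith
    have := hanti (Set.left_mem_Icc.2 hab) (Set.right_mem_Icc.2 hab) hab
    simp only [hW] at this
    linarith
  -- V eventually drops below Vbar
  have hdrop : ∃ t₀, Φ < t₀ ∧ V t₀ < Vbar := by
    by_contra h
    push_neg at h
    have ha0 : (0:ℝ) ≤ Φ + 1 := by linarith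
    have hq : 0 ≤ V (Φ + 1) / δ := div_nonneg (hVnonneg _ ha0) hδ.le
    have hab : Φ + 1 ≤ Φ + 1 + V (Φ + 1) / δ + 1 := by linarith
    have hk := key (Φ + 1) (Φ + 1 + V (Φ + 1) / δ + 1) (by linarith) hab
      (fun t ht => h t (by linarith [ht.1]))
    have hVb : 0 ≤ V (Φ + 1 + V (Φ + 1) / δ + 1) := hVnonneg _ (by linarith)
    have hcancel : δ * (V (Φ + 1) / δ) = V (Φ + 1) := by
      field_simp
    nlinarith
  obtain ⟨t₀, ht₀Φ, ht₀⟩ := hdrop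
  -- invariance: V stays below Vbar after t₀
  have hstay : ∀ t, t₀ < t → V t < Vbar := by
    by_contra h
    push_neg at h
    obtain ⟨t₁, ht₁, hVt₁⟩ := h
    set S : Set ℝ := {t | t₀ ≤ t ∧ Vbar ≤ V t} with hS
    have hSne : S.Nonempty := ⟨t₁, ht₁.le, hVt₁⟩
    have hSbdd : BddBelow S := ⟨t₀, fun t ht => ht.1⟩
    have hSclosed : IsClosed S := by
      have hE : S = Set.Ici t₀ ∩ V ⁻¹' Set.Ici Vbar := rfl
      rw [hE]
      have hsub : Set.Ici t₀ ⊆ Set.Ici (0:ℝ) := fun t ht =>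
        le_trans (le_trans hΦ ht₀Φ.le) ht
      exact (hVcont.mono hsub).preimage_isClosed_of_isClosed isClosed_Ici isClosed_Ici
    set s : ℝ := sInf S with hs
    have hmem : s ∈ S := hSclosed.csInf_mem hSne hSbdd
    have hst₀ : t₀ < s := lt_of_le_of_ne hmem.1 (by
      intro hE
      rw [hE] at ht₀
      exact absurd hmem.2 (not_le.2 ht₀))
    have hsΦ : Φ < s := ht₀Φ.trans hst₀
    have hs0 : (0:ℝ) ≤ s := hΦ.trans hsΦ.le
    -- all points in (t₀, s) have V < Vbar
    have hbelow : ∀ t, t₀ < t → t < s → V t < Vbar := by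
      intro t htt₀ hts
      by_contra hge
      push_neg at hge
      exact absurd (csInf_le hSbdd ⟨htt₀.le, hge⟩) (not_le.2 hts)
    -- derivative at s is negative
    have hdV : DifferentiableAt ℝ V s := hVdiff s hs0 (hVbar.trans_le hmem.2)
    have hds : deriv V s ≤ -δ := hder s hsΦ hmem.2
    have hslope := hasDerivAt_iff_tendsto_slope.1 hdV.hasDerivAt
    have hneg : ∀ᶠ t in nhdsWithin s {s}ᶜ, slope V s t < 0 := by
      have : Set.Iio (0:ℝ) ∈ nhds (deriv V s) :=
        Iio_mem_nhds (lt_of_le_of_lt hds (by linarith))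
      exact hslope this
    have hneg' : ∀ᶠ t in nhdsWithin s (Set.Iio s), slope V s t < 0 :=
      hneg.filter_mono (nhdsWithin_mono s (by
        intro t ht
        exact ne_of_lt ht))
    have hnear : ∀ᶠ t in nhdsWithin s (Set.Iio s), t₀ < t :=
      eventually_nhdsWithin_of_eventually_nhds (eventually_gt_nhds hst₀)
    have hin : ∀ᶠ t in nhdsWithin s (Set.Iio s), t ∈ Set.Iio s :=
      eventually_mem_nhdsWithin
    have : ∀ᶠ t in nhdsWithin s (Set.Iio s), False := by
      filter_upwards [hneg', hnear, hin] with t h1 h2 h3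
      have hts : t - s < 0 := sub_neg.2 h3
      have : 0 < V t - V s := by
        rw [slope_def_field] at h1
        by_contra hle
        push_neg at hle
        have := div_nonneg_of_nonpos (by linarith : V t - V s ≤ 0) hts.le
        linarith
      have hVt : V t < Vbar := hbelow t h2 h3
      have : Vbar < Vbar := lt_of_le_of_lt hmem.2 (by linarith)
      exact lt_irrefl _ this
    have hne : (nhdsWithin s (Set.Iio s)).NeBot := by
      exact nhdsLT_neBot s
    exact (this.exists).elim (fun _ hf => hf)
  refine ⟨?_, t₀, hstay⟩
  have hev : ∀ᶠ t in atTop, V t ≤ Vbar :=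
    eventually_atTop.2 ⟨t₀ + 1, fun t ht => (hstay t (by linarith)).le⟩
  have hcb : IsCoboundedUnder (· ≤ ·) atTop V :=
    isCoboundedUnder_le_of_eventually_le atTop
      (x := 0) (eventually_atTop.2 ⟨0, fun t ht => hVnonneg t ht⟩)
  exact limsup_le_of_le hcb hev
end

section
/- Let c, α, C₁ > 0 with α ∈ (0,1), β ∈ [0,1), and Φ̄ ≥ 0. Suppose V : ℝ≥0 → ℝ≥0 is differentiable, satisfies V'(t) ≤ C₁·V(t)^β for t ∈ [0, Φ̄], and V'(t) ≤ -c·V(t)^α for t > Φ̄ whenever V(t) > 0. Then V(t) = 0 for all t ≥ T₀ where T₀ = Φ̄ + (V(0)^(1-β) + (1-β)·C₁·Φ̄)^((1-α)/(1-β)) / (c·(1-α)). -/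
open Set Filter

open Set

/-- Once V hits zero (after Φ), it stays zero. -/
lemma stays_zero (c α Φ : ℝ) (hc : 0 < c) (hα : α ∈ Set.Ioo (0:ℝ) 1) (hΦ : 0 ≤ Φ)
    (V : ℝ → ℝ) (hVdiff : Differentiable ℝ V)
    (hVnonneg : ∀ t, 0 ≤ t → 0 ≤ V t)
    (hdecay : ∀ t, Φ < t → 0 < V t → deriv V t ≤ -c * V t ^ α)
    (t₁ : ℝ) (ht₁ : Φ ≤ t₁) (hV₁ : V t₁ = 0) :
    ∀ t, t₁ ≤ t → V t = 0 := by
  intro t ht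
  rcases eq_or_lt_of_le ht with rfl | ht
  · exact hV₁
  by_contra hne
  have htpos : 0 < V t := lt_of_le_of_ne (hVnonneg t (le_trans hΦ (le_trans ht₁ ht.le))) (Ne.symm hne)
  set S : Set ℝ := Icc t₁ t ∩ V ⁻¹' {0} with hS
  have hSc : IsClosed S := isClosed_Icc.inter (isClosed_singleton.preimage hVdiff.continuous)
  have hSne : S.Nonempty := ⟨t₁, ⟨le_refl _, ht.le⟩, hV₁⟩
  have hSbdd : BddAbove S := ⟨t, fun x hx => hx.1.2⟩
  set s := sSup S with hs
  have hsS : s ∈ S := hSc.csSup_mem hSne hSbdd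
  have hVs : V s = 0 := hsS.2
  have hst : s < t := lt_of_le_of_ne hsS.1.2 (fun h => hne (h ▸ hVs))
  obtain ⟨ξ, hξ, hξd⟩ := exists_hasDerivAt_eq_slope V (deriv V) hst
    hVdiff.continuous.continuousOn (fun x _ => (hVdiff x).hasDerivAt)
  have hξpos : 0 < V ξ := by
    rcases lt_or_ge 0 (V ξ) with h | h
    · exact h
    have : V ξ = 0 := le_antisymm h (hVnonneg ξ (le_trans hΦ (le_trans ht₁ (le_trans hsS.1.1 hξ.1.le))))
    have : ξ ∈ S := ⟨⟨le_trans hsS.1.1 hξ.1.le, hξ.2.le⟩, this⟩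
    exact absurd (le_csSup hSbdd this) (not_le.mpr hξ.1)
  have hd : deriv V ξ ≤ -c * V ξ ^ α :=
    hdecay ξ (lt_of_le_of_lt (le_trans ht₁ hsS.1.1) hξ.1) hξpos
  have hneg : deriv V ξ < 0 :=
    lt_of_le_of_lt hd (by
      have := Real.rpow_pos_of_pos hξpos α
      nlinarith)
  rw [hξd, hVs] at hneg
  have : 0 < (V t - 0) / (t - s) := div_pos (by linarith) (by linarith)
  linarith

lemma grow_bound (C₁ β Φ : ℝ) (hC₁ : 0 < C₁) (hβ : β ∈ Set.Ico (0:ℝ) 1) (hΦ : 0 ≤ Φ)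
    (V : ℝ → ℝ) (hVdiff : Differentiable ℝ V)
    (hV0 : 0 ≤ V 0)
    (hgrow : ∀ t ∈ Set.Icc 0 Φ, deriv V t ≤ C₁ * V t ^ β) :
    V Φ ≤ (V 0 ^ (1 - β) + (1 - β) * C₁ * Φ) ^ (1/(1-β)) := by
  obtain ⟨hβ0, hβ1⟩ := hβ
  have h1β : (0:ℝ) < 1 - β := by linarith
  have hp : (0:ℝ) < 1/(1-β) := by positivity
  have hpβ : 1/(1-β) - 1 = (1/(1-β)) * β := by field_simp; ring
  have key : ∀ ε > (0:ℝ), V Φ ≤ ((V 0 ^ (1-β) + (1-β)*C₁*Φ) + ε*(1+(1-β)*Φ)) ^ (1/(1-β)) := by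
    intro ε hε
    set g : ℝ → ℝ := fun x => V 0 ^ (1-β) + ε + (1-β)*(C₁+ε)*x with hg
    have hgpos : ∀ x ∈ Icc (0:ℝ) Φ, 0 < g x := by
      intro x hx
      have h1 : 0 ≤ (1-β)*(C₁+ε)*x := mul_nonneg (mul_nonneg h1β.le (by linarith)) hx.1
      have h2 : 0 ≤ V 0 ^ (1-β) := Real.rpow_nonneg hV0 _
      simp only [hg]; linarith
    have hgd : ∀ x : ℝ, HasDerivAt g ((1-β)*(C₁+ε)) x := by
      intro x
      simpa [hg] using ((hasDerivAt_id x).const_mul ((1-β)*(C₁+ε))).const_add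
        (V 0 ^ (1-β) + ε)
    set B : ℝ → ℝ := fun x => g x ^ (1/(1-β)) with hB
    set B' : ℝ → ℝ := fun x => (C₁+ε) * g x ^ ((1/(1-β)) * β) with hB'
    have hBd : ∀ x ∈ Ico (0:ℝ) Φ, HasDerivAt B (B' x) x := by
      intro x hx
      have hgx := hgpos x (Ico_subset_Icc_self hx)
      have := (hgd x).rpow_const (p := 1/(1-β)) (Or.inl hgx.ne')
      convert this using 1
      simp only [hB']
      rw [hpβ]
      field_simp
    have hBcont : ContinuousOn B (Icc 0 Φ) := by
      apply ContinuousOn.rpow_const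
      · exact (by continuity : Continuous g).continuousOn
      · exact fun x hx => Or.inl (hgpos x hx).ne'
    have ha : V 0 ≤ B 0 := by
      have h0 : (V 0 ^ (1-β)) ^ (1/(1-β)) = V 0 := by
        rw [← Real.rpow_mul hV0]
        rw [mul_one_div_cancel h1β.ne', Real.rpow_one]
      have hg0 : g 0 = V 0 ^ (1-β) + ε := by simp [hg]
      calc V 0 = (V 0 ^ (1-β)) ^ (1/(1-β)) := h0.symm
        _ ≤ (V 0 ^ (1-β) + ε) ^ (1/(1-β)) :=
            Real.rpow_le_rpow (Real.rpow_nonneg hV0 _) (by linarith) hp.le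
        _ = B 0 := by rw [hB]; simp [hg0]
    have bound : ∀ x ∈ Ico (0:ℝ) Φ, V x = B x → deriv V x < B' x := by
      intro x hx hVB
      have hgx := hgpos x (Ico_subset_Icc_self hx)
      have h1 : deriv V x ≤ C₁ * V x ^ β := hgrow x (Ico_subset_Icc_self hx)
      have h2 : V x ^ β = g x ^ ((1/(1-β)) * β) := by
        rw [hVB, hB, ← Real.rpow_mul hgx.le]
      have h3 : 0 < g x ^ ((1/(1-β)) * β) := Real.rpow_pos_of_pos hgx _
      rw [h2] at h1
      calc deriv V x ≤ C₁ * g x ^ ((1/(1-β)) * β) := h1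
        _ < (C₁+ε) * g x ^ ((1/(1-β)) * β) := by nlinarith
    have hVΦ : V Φ ≤ B Φ := by
      refine image_le_of_deriv_right_lt_deriv_boundary'
        hVdiff.continuous.continuousOn
        (fun x _ => (hVdiff x).hasDerivAt.hasDerivWithinAt) ha hBcont
        (fun x hx => (hBd x hx).hasDerivWithinAt) bound ⟨hΦ, le_refl Φ⟩
    have hgΦ : g Φ = (V 0 ^ (1-β) + (1-β)*C₁*Φ) + ε*(1+(1-β)*Φ) := by
      simp only [hg]; ring
    rw [hB] at hVΦ
    simpa [hgΦ] using hVΦ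
  -- limit ε → 0⁺
  set A := V 0 ^ (1-β) + (1-β)*C₁*Φ with hA
  have hlim : Tendsto (fun ε : ℝ => (A + ε*(1+(1-β)*Φ)) ^ (1/(1-β))) (nhdsWithin 0 (Ioi 0))
      (nhds (A ^ (1/(1-β)))) := by
    have hcont : ContinuousAt (fun ε : ℝ => (A + ε*(1+(1-β)*Φ)) ^ (1/(1-β))) 0 := by
      apply ContinuousAt.rpow_const
      · exact (by continuity : Continuous (fun ε : ℝ => A + ε*(1+(1-β)*Φ))).continuousAt
      · exact Or.inr hp.le
    have h2 := hcont.continuousWithinAt (s := Ioi 0) |>.tendsto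
    simpa using h2
  exact ge_of_tendsto hlim (eventually_mem_nhdsWithin.mono (fun ε hε => key ε hε))

lemma hits_zero (c α Φ : ℝ) (hc : 0 < c) (hα : α ∈ Set.Ioo (0:ℝ) 1) (hΦ : 0 ≤ Φ)
    (V : ℝ → ℝ) (hVdiff : Differentiable ℝ V)
    (hVnonneg : ∀ t, 0 ≤ t → 0 ≤ V t)
    (hdecay : ∀ t, Φ < t → 0 < V t → deriv V t ≤ -c * V t ^ α) :
    ∃ t₁ ∈ Icc Φ (Φ + V Φ ^ (1-α) / (c*(1-α))), V t₁ = 0 := by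
  obtain ⟨hα0, hα1⟩ := hα
  have h1α : (0:ℝ) < 1 - α := by linarith
  have hcα : (0:ℝ) < c * (1-α) := by positivity
  set T := Φ + V Φ ^ (1-α) / (c*(1-α)) with hT
  have hVΦ0 : 0 ≤ V Φ := hVnonneg Φ hΦ
  rcases eq_or_lt_of_le hVΦ0 with hVΦ | hVΦ
  · refine ⟨Φ, ⟨le_refl Φ, ?_⟩, hVΦ.symm⟩
    have h0 : (0:ℝ) ≤ V Φ ^ (1-α) / (c*(1-α)) := by positivity
    rw [hT]; linarith
  · have hΦT : Φ < T := by
      have h0 : (0:ℝ) < V Φ ^ (1-α) / (c*(1-α)) :=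
        div_pos (Real.rpow_pos_of_pos hVΦ _) hcα
      rw [hT]; linarith
    by_contra hno
    push_neg at hno
    have hpos : ∀ u ∈ Icc Φ T, 0 < V u := by
      intro u hu
      rcases lt_or_ge 0 (V u) with h | h
      · exact h
      · exact absurd (le_antisymm h (hVnonneg u (le_trans hΦ hu.1))) (hno u hu)
    set W : ℝ → ℝ := fun u => V u ^ (1-α) with hW
    set W' : ℝ → ℝ := fun u => deriv V u * (1-α) * V u ^ (1-α-1) with hW'
    have key : ∀ s ∈ Ioo Φ T, W T ≤ W s - c*(1-α)*(T-s) := by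
      intro s hs
      have hWcont : ContinuousOn W (Icc s T) :=
        hVdiff.continuous.continuousOn.rpow_const (fun u hu => Or.inr h1α.le)
      have hWd : ∀ u ∈ Ioo s T, HasDerivAt W (W' u) u := by
        intro u hu
        have hu' : u ∈ Icc Φ T := ⟨le_trans hs.1.le hu.1.le, hu.2.le⟩
        exact (hVdiff u).hasDerivAt.rpow_const (Or.inl (hpos u hu').ne')
      obtain ⟨ξ, hξ, hξd⟩ := exists_hasDerivAt_eq_slope W W' hs.2 hWcont hWd
      have hξΦ : Φ < ξ := lt_of_le_of_lt hs.1.le hξ.1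
      have hξpos : 0 < V ξ := hpos ξ ⟨hξΦ.le, hξ.2.le⟩
      have hd : deriv V ξ ≤ -c * V ξ ^ α := hdecay ξ hξΦ hξpos
      have hk : (0:ℝ) < (1-α) * V ξ ^ (1-α-1) :=
        mul_pos h1α (Real.rpow_pos_of_pos hξpos _)
      have hW'le : W' ξ ≤ -(c*(1-α)) := by
        have hprod : V ξ ^ α * V ξ ^ (1-α-1) = 1 := by
          rw [← Real.rpow_add hξpos]
          norm_num
        have h1 : deriv V ξ * ((1-α) * V ξ ^ (1-α-1)) ≤
            (-c * V ξ ^ α) * ((1-α) * V ξ ^ (1-α-1)) :=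
          mul_le_mul_of_nonneg_right hd hk.le
        have h2 : (-c * V ξ ^ α) * ((1-α) * V ξ ^ (1-α-1)) = -(c*(1-α)) := by
          linear_combination (-(c*(1-α))) * hprod
        simp only [hW']
        calc deriv V ξ * (1-α) * V ξ ^ (1-α-1)
            = deriv V ξ * ((1-α) * V ξ ^ (1-α-1)) := by ring
          _ ≤ (-c * V ξ ^ α) * ((1-α) * V ξ ^ (1-α-1)) := h1
          _ = -(c*(1-α)) := h2
      rw [hξd] at hW'le
      have hTs : 0 < T - s := by linarith [hs.2]
      have := (div_le_iff₀ hTs).mp hW'le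
      linarith
    -- take the limit s → Φ⁺
    have hWcontΦ : ContinuousAt (fun s => W s - c*(1-α)*(T-s)) Φ := by
      apply ContinuousAt.sub
      · exact (hVdiff.continuous.continuousAt).rpow_const (Or.inl hVΦ.ne')
      · exact Continuous.continuousAt (by continuity)
    have hlim : Tendsto (fun s => W s - c*(1-α)*(T-s)) (nhdsWithin Φ (Ioi Φ))
        (nhds (W Φ - c*(1-α)*(T-Φ))) := hWcontΦ.continuousWithinAt.tendsto
    have hev : ∀ᶠ s in nhdsWithin Φ (Ioi Φ), W T ≤ W s - c*(1-α)*(T-s) := by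
      filter_upwards [Ioo_mem_nhdsGT_of_mem ⟨le_refl Φ, hΦT⟩] with s hs
      exact key s hs
    have hfinal : W T ≤ W Φ - c*(1-α)*(T-Φ) := ge_of_tendsto hlim hev
    have hTΦ : c*(1-α)*(T-Φ) = V Φ ^ (1-α) := by
      rw [hT]
      field_simp
      ring
    have hWT : 0 < W T := Real.rpow_pos_of_pos (hpos T ⟨hΦT.le, le_refl T⟩) _
    simp only [hW] at hfinal hWT
    rw [hTΦ] at hfinal
    linarith

/-- Convergence-time bound: sublinear growth on [0, Φ̄] followed by the decay
inequality V' ≤ -c V^α forces V to vanish after time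
T₀ = Φ̄ + (V(0)^(1-β) + (1-β)C₁Φ̄)^((1-α)/(1-β)) / (c(1-α)). -/
theorem convergence_time_bound
    (c α C₁ β Φ : ℝ) (hc : 0 < c) (hC₁ : 0 < C₁)
    (hα : α ∈ Set.Ioo (0:ℝ) 1) (hβ : β ∈ Set.Ico (0:ℝ) 1) (hΦ : 0 ≤ Φ)
    (V : ℝ → ℝ) (hVdiff : Differentiable ℝ V)
    (hVnonneg : ∀ t, 0 ≤ t → 0 ≤ V t)
    (hgrow : ∀ t ∈ Set.Icc 0 Φ, deriv V t ≤ C₁ * V t ^ β)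
    (hdecay : ∀ t, Φ < t → 0 < V t → deriv V t ≤ -c * V t ^ α) :
    ∀ t, Φ + (V 0 ^ (1 - β) + (1 - β) * C₁ * Φ) ^ ((1 - α) / (1 - β)) / (c * (1 - α)) ≤ t →
      V t = 0 := by
  intro t ht
  obtain ⟨hα0, hα1⟩ := hα
  obtain ⟨hβ0, hβ1⟩ := hβ
  have h1α : (0:ℝ) < 1 - α := by linarith
  have h1β : (0:ℝ) < 1 - β := by linarith
  have hcα : (0:ℝ) < c * (1 - α) := by positivity
  set A := V 0 ^ (1 - β) + (1 - β) * C₁ * Φ with hA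
  have hA0 : 0 ≤ A := by
    have := Real.rpow_nonneg (hVnonneg 0 le_rfl) (1 - β)
    have : 0 ≤ (1 - β) * C₁ * Φ := by positivity
    rw [hA]
    have := Real.rpow_nonneg (hVnonneg 0 le_rfl) (1 - β)
    linarith
  have hVΦle : V Φ ≤ A ^ (1 / (1 - β)) :=
    grow_bound C₁ β Φ hC₁ ⟨hβ0, hβ1⟩ hΦ V hVdiff (hVnonneg 0 le_rfl) hgrow
  have hVΦpow : V Φ ^ (1 - α) ≤ A ^ ((1 - α) / (1 - β)) := by
    calc V Φ ^ (1 - α) ≤ (A ^ (1 / (1 - β))) ^ (1 - α) :=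
          Real.rpow_le_rpow (hVnonneg Φ hΦ) hVΦle h1α.le
      _ = A ^ ((1 / (1 - β)) * (1 - α)) := (Real.rpow_mul hA0 _ _).symm
      _ = A ^ ((1 - α) / (1 - β)) := by ring_nf
  obtain ⟨t₁, ht₁, hVt₁⟩ := hits_zero c α Φ hc ⟨hα0, hα1⟩ hΦ V hVdiff hVnonneg hdecay
  have ht₁t : t₁ ≤ t := by
    have h1 : V Φ ^ (1 - α) / (c * (1 - α)) ≤ A ^ ((1 - α) / (1 - β)) / (c * (1 - α)) := by
      gcongr
    have := ht₁.2
    linarith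
  exact stays_zero c α Φ hc ⟨hα0, hα1⟩ hΦ V hVdiff hVnonneg hdecay t₁ ht₁.1 hVt₁ t ht₁t
end
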